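/- For all complex numbers a and c, ((1+i)^(2c-2a-1))/(i^(2c-1)) + ((1-i)^(2c-2a-1))/((-i)^(2c-1)) = 2^(c-a+1/2) · cos((2c+2a-1)π/4), where complex powers are taken with the principal branch. -/
import Mathlib


open Complex Real

theorem eval_at_neg_one (a c : ℂ) :
    (1 + Complex.I) ^ (2 * c - 2 * a - 1) / Complex.I ^ (2 * c - 1) +
      (1 - Complex.I) ^ (2 * c - 2 * a - 1) / (-Complex.I) ^ (2 * c - 1) =
    (2 : ℂ) ^ (c - a + 1 / 2) * Complex.cos ((2 * c + 2 * a - 1) * (π : ℂ) / 4) := by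
  have hpi := Real.pi_pos
  have hs2 : Real.sqrt 2 * Real.sqrt 2 = 2 := Real.mul_self_sqrt (by norm_num)
  have hexp2 : Real.exp (Real.log 2 / 2) = Real.sqrt 2 := by
    rw [Real.exp_half, Real.exp_log (by norm_num)]
  have hA : (1 + Complex.I : ℂ) =
      Complex.exp ((Real.log 2 / 2 : ℝ) + (π / 4 : ℝ) * Complex.I) := by
    rw [Complex.exp_add_mul_I, ← Complex.ofReal_exp, ← Complex.ofReal_cos, ← Complex.ofReal_sin,
      Real.cos_pi_div_four, Real.sin_pi_div_four, hexp2]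
    rw [Complex.ext_iff]
    constructor <;> · norm_num; nlinarith [hs2]
  have hB : (1 - Complex.I : ℂ) =
      Complex.exp ((Real.log 2 / 2 : ℝ) + (-(π / 4) : ℝ) * Complex.I) := by
    rw [Complex.exp_add_mul_I, ← Complex.ofReal_exp, ← Complex.ofReal_cos, ← Complex.ofReal_sin,
      Real.cos_neg, Real.sin_neg, Real.cos_pi_div_four, Real.sin_pi_div_four, hexp2]
    rw [Complex.ext_iff]
    constructor <;> · norm_num; nlinarith [hs2]
  have him : ∀ t : ℝ, ((Real.log 2 / 2 : ℝ) + (t : ℝ) * Complex.I).im = t := by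
    intro t
    simp only [Complex.add_im, Complex.ofReal_im, Complex.mul_im, Complex.ofReal_re,
      Complex.I_im, Complex.I_re]
    ring
  have hlogA : Complex.log (1 + Complex.I) =
      (Real.log 2 / 2 : ℝ) + (π / 4 : ℝ) * Complex.I := by
    rw [hA, Complex.log_exp] <;> rw [him] <;> linarith
  have hlogB : Complex.log (1 - Complex.I) =
      (Real.log 2 / 2 : ℝ) + (-(π / 4) : ℝ) * Complex.I := by
    rw [hB, Complex.log_exp] <;> rw [him] <;> linarith
  have h1 : (1 + Complex.I : ℂ) ≠ 0 := by
    intro h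
    simpa using congrArg Complex.im h
  have h2 : (1 - Complex.I : ℂ) ≠ 0 := by
    intro h
    simpa using congrArg Complex.im h
  rw [Complex.cpow_def_of_ne_zero h1, Complex.cpow_def_of_ne_zero h2,
    Complex.cpow_def_of_ne_zero Complex.I_ne_zero,
    Complex.cpow_def_of_ne_zero (neg_ne_zero.2 Complex.I_ne_zero),
    Complex.cpow_def_of_ne_zero two_ne_zero,
    hlogA, hlogB, Complex.log_I, Complex.log_neg_I, ← Complex.exp_sub, ← Complex.exp_sub,
    show Complex.log 2 = ((Real.log 2 : ℝ) : ℂ) by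
      rw [show (2:ℂ) = ((2:ℝ):ℂ) by norm_num, ← Complex.ofReal_log (by norm_num : (0:ℝ) ≤ 2)]]
  set L : ℂ := ((Real.log 2 : ℝ) : ℂ)
  set T : ℂ := (2 * c + 2 * a - 1) * (π : ℂ) / 4
  have e1 : ((Real.log 2 / 2 : ℝ) + (π / 4 : ℝ) * Complex.I) * (2 * c - 2 * a - 1) -
      (π : ℂ) / 2 * Complex.I * (2 * c - 1) = (c - a - 1/2) * L + -(T * Complex.I) := by
    simp only [T, L]
    push_cast
    ring
  have e2 : ((Real.log 2 / 2 : ℝ) + (-(π / 4) : ℝ) * Complex.I) * (2 * c - 2 * a - 1) -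
      -((π : ℂ) / 2) * Complex.I * (2 * c - 1) = (c - a - 1/2) * L + T * Complex.I := by
    simp only [T, L]
    push_cast
    ring
  have e3 : L * (c - a + 1/2) = ((c - a - 1/2) * L) + L := by ring
  rw [e1, e2, e3, Complex.exp_add, Complex.exp_add, Complex.exp_add, Complex.cos]
  have hL : Complex.exp L = 2 := by
    rw [← Complex.ofReal_exp, Real.exp_log (by norm_num)]
    norm_num
  rw [hL]
  ring_nf
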